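/- Let g : ℝ³ → ℝ be a polynomial with Δg = 0, written (on the ball) as a finite sum of harmonic homogeneous polynomials. Define u(x) = (2x·∇g(x) + g(x))·x − |x|²·∇g(x). Then u is a harmonic vector field: Δu = 0 componentwise. -/

import Mathlib

open MvPolynomial

theorem pd_comm {σ R : Type*} [CommSemiring R] [DecidableEq σ] (i j : σ) (p : MvPolynomial σ R) :
    pderiv i (pderiv j p) = pderiv j (pderiv i p) := by
  refine MvPolynomial.induction_on (motive := fun q => pderiv i (pderiv j q) = pderiv j (pderiv i q))
    p (fun a => by simp) (fun p q hp hq => by simp [hp, hq]) ?_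
  intro q k hq
  rcases eq_or_ne i k with rfl | hik
  · rcases eq_or_ne j i with rfl | hj <;>
      simp [pderiv_mul, pderiv_X_self, pderiv_X_of_ne, hq, *] <;> ring
  · rcases eq_or_ne j k with rfl | hj <;>
      simp [pderiv_mul, pderiv_X_self, pderiv_X_of_ne, hq, *] <;> ring

set_option maxHeartbeats 2000000 in
/-- For a harmonic polynomial `g` on `ℝ³`, each component of
`u(x) = (2x·∇g(x) + g(x))·x − |x|²·∇g(x)` is a harmonic polynomial. -/
theorem stmt16 (g : MvPolynomial (Fin 3) ℝ)
    (hg : ∑ i : Fin 3, pderiv i (pderiv i g) = 0) :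
    ∀ i : Fin 3,
      ∑ j : Fin 3, pderiv j (pderiv j
        ((2 * (∑ k : Fin 3, X k * pderiv k g) + g) * X i
          - (∑ k : Fin 3, X k ^ 2) * pderiv i g)) = 0 := by
  have c10 : ∀ p : MvPolynomial (Fin 3) ℝ, pderiv 1 (pderiv 0 p) = pderiv 0 (pderiv 1 p) :=
    pd_comm 1 0
  have c20 : ∀ p : MvPolynomial (Fin 3) ℝ, pderiv 2 (pderiv 0 p) = pderiv 0 (pderiv 2 p) :=
    pd_comm 2 0
  have c21 : ∀ p : MvPolynomial (Fin 3) ℝ, pderiv 2 (pderiv 1 p) = pderiv 1 (pderiv 2 p) :=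
    pd_comm 2 1
  simp only [Fin.sum_univ_three] at hg
  have hd0 := congrArg (pderiv (0 : Fin 3)) hg
  have hd1 := congrArg (pderiv (1 : Fin 3)) hg
  have hd2 := congrArg (pderiv (2 : Fin 3)) hg
  simp only [map_add, map_zero, c10, c20, c21] at hd0 hd1 hd2
  have p2 : ∀ j : Fin 3, pderiv j (2 : MvPolynomial (Fin 3) ℝ) = 0 := fun j => by
    rw [← map_ofNat (C : ℝ →+* MvPolynomial (Fin 3) ℝ) 2, pderiv_C]
  intro i
  obtain rfl | rfl | rfl : i = 0 ∨ i = 1 ∨ i = 2 := by revert i; decide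
  all_goals
    simp only [Fin.sum_univ_three, map_add, map_sub, pderiv_mul, pderiv_pow,
      pderiv_X_self, pderiv_X_of_ne (by decide : (1:Fin 3) ≠ 0),
      pderiv_X_of_ne (by decide : (2:Fin 3) ≠ 0),
      pderiv_X_of_ne (by decide : (0:Fin 3) ≠ 1),
      pderiv_X_of_ne (by decide : (2:Fin 3) ≠ 1),
      pderiv_X_of_ne (by decide : (0:Fin 3) ≠ 2),
      pderiv_X_of_ne (by decide : (1:Fin 3) ≠ 2),
      c10, c20, c21, mul_zero, zero_mul, add_zero, zero_add, mul_one, one_mul, map_zero,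
      p2, pderiv_one, Nat.cast_ofNat]
  · linear_combination (5 * X 0) * hg + (2*X 0*X 0)*hd0 + (2*X 0*X 1)*hd1 + (2*X 0*X 2)*hd2
      - (X 0^2 + X 1^2 + X 2^2)*hd0
  · linear_combination (5 * X 1) * hg + (2*X 1*X 0)*hd0 + (2*X 1*X 1)*hd1 + (2*X 1*X 2)*hd2
      - (X 0^2 + X 1^2 + X 2^2)*hd1
  · linear_combination (5 * X 2) * hg + (2*X 2*X 0)*hd0 + (2*X 2*X 1)*hd1 + (2*X 2*X 2)*hd2
      - (X 0^2 + X 1^2 + X 2^2)*hd2
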